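/- Fix vertices s, t ∈ V, and let H ⊆ E be the set of edges that are marked from s, or marked from t, or are level-W. Then every taut path from s to t uses only edges belonging to H; in particular, every taut path (and hence every optimal path, since optimal paths are taut) from s to t resides within the subgraph induced by H. -/

import Mathlib

open SimpleGraph

variable {V : Type*}

/-- The set of levels (under `L`) of taut neighbours of edge `e` at vertex `v`:
edges `f` of `G` incident to `v` such that the turn from `e` to `f` at `v` is taut. -/
def tautNbrLevels (G : SimpleGraph V) (taut : V → Sym2 V → Sym2 V → Prop)
    (L : Sym2 V → ℕ∞) (v : V) (e : Sym2 V) : Set ℕ∞ :=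
  {n | ∃ f ∈ G.edgeSet, v ∈ f ∧ taut v e f ∧ n = L f}

/-- The monotone operator on `E → ℕ∞` whose least fixed point defines edge levels:
`(levelOp L) e = 1 + min over the endpoints v of e of sup {L f : f taut neighbour of e at v}`
(with `sSup ∅ = 0`). -/
noncomputable def levelOp (G : SimpleGraph V) (taut : V → Sym2 V → Sym2 V → Prop)
    (L : Sym2 V → ℕ∞) (e : Sym2 V) : ℕ∞ :=
  1 + ⨅ v ∈ e, sSup (tautNbrLevels G taut L v e)

/-- `L` is the edge-level function: the pointwise least fixed point (on edges of `G`)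
of the level operator. -/
def IsEdgeLevel (G : SimpleGraph V) (taut : V → Sym2 V → Sym2 V → Prop)
    (L : Sym2 V → ℕ∞) : Prop :=
  (∀ e ∈ G.edgeSet, L e = levelOp G taut L e) ∧
  ∀ L' : Sym2 V → ℕ∞, (∀ e ∈ G.edgeSet, L' e = levelOp G taut L' e) →
    ∀ e ∈ G.edgeSet, L e ≤ L' e

/-- `p 0, p 1, …, p n` is a taut path in `G`: a walk of length `n ≥ 1` such that at every
interior vertex `p i` (`1 ≤ i ≤ n-1`), the turn from edge `p (i-1) p i` to edge
`p i p (i+1)` is taut. -/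
def IsTautPath (G : SimpleGraph V) (taut : V → Sym2 V → Sym2 V → Prop)
    (n : ℕ) (p : ℕ → V) : Prop :=
  1 ≤ n ∧ (∀ i < n, G.Adj (p i) (p (i + 1))) ∧
  ∀ i, 1 ≤ i → i < n → taut (p i) s(p (i - 1), p i) s(p i, p (i + 1))

/-- An edge `e` is *marked from* `s` if there is a taut path starting at `s` whose edges
all have finite level, whose successive edge levels are strictly increasing, and whose
final edge is `e`. -/
def MarkedFrom (G : SimpleGraph V) (taut : V → Sym2 V → Sym2 V → Prop)
    (L : Sym2 V → ℕ∞) (s : V) (e : Sym2 V) : Prop :=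
  ∃ (m : ℕ) (p : ℕ → V), IsTautPath G taut m p ∧ p 0 = s ∧
    (∀ i, 1 ≤ i → i ≤ m → L s(p (i - 1), p i) < ⊤) ∧
    (∀ i, 1 ≤ i → i + 1 ≤ m → L s(p (i - 1), p i) < L s(p i, p (i + 1))) ∧
    s(p (m - 1), p m) = e

lemma enat_lt_of_one_add_le {x y : ℕ∞} (h : 1 + x ≤ y) (hy : y < ⊤) : x < y := by
  have hx : x ≠ ⊤ := by
    intro h'
    rw [h'] at h
    simp at h
    exact hy.ne h
  rw [add_comm] at h
  exact (ENat.add_one_le_iff hx).mp h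

lemma exists_min_endpoint (G : SimpleGraph V) (taut : V → Sym2 V → Sym2 V → Prop)
    (L : Sym2 V → ℕ∞) (hfix : ∀ e ∈ G.edgeSet, L e = levelOp G taut L e)
    {u v : V} (huv : G.Adj u v) :
    ∃ w, (w = u ∨ w = v) ∧
      ∀ f ∈ G.edgeSet, w ∈ f → taut w s(u, v) f → 1 + L f ≤ L s(u, v) := by
  have he : s(u, v) ∈ G.edgeSet := huv
  have h := hfix s(u, v) he
  rw [levelOp] at h
  have hinf : (⨅ w ∈ s(u, v), sSup (tautNbrLevels G taut L w s(u, v))) =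
      min (sSup (tautNbrLevels G taut L u s(u, v)))
        (sSup (tautNbrLevels G taut L v s(u, v))) := by
    apply le_antisymm
    · exact le_min (iInf₂_le u (Sym2.mem_mk_left u v)) (iInf₂_le v (Sym2.mem_mk_right u v))
    · refine le_iInf₂ fun w hw => ?_
      rcases Sym2.mem_iff.mp hw with rfl | rfl
      exacts [min_le_left _ _, min_le_right _ _]
  rcases min_cases (sSup (tautNbrLevels G taut L u s(u, v)))
      (sSup (tautNbrLevels G taut L v s(u, v))) with ⟨hmin, _⟩ | ⟨hmin, _⟩
  · refine ⟨u, Or.inl rfl, fun f hf hwf htf => ?_⟩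
    have hle : L f ≤ sSup (tautNbrLevels G taut L u s(u, v)) := le_sSup ⟨f, hf, hwf, htf, rfl⟩
    calc 1 + L f ≤ 1 + sSup (tautNbrLevels G taut L u s(u, v)) := add_le_add_right hle 1
      _ = L s(u, v) := by rw [h, hinf, hmin]
  · refine ⟨v, Or.inr rfl, fun f hf hwf htf => ?_⟩
    have hle : L f ≤ sSup (tautNbrLevels G taut L v s(u, v)) := le_sSup ⟨f, hf, hwf, htf, rfl⟩
    calc 1 + L f ≤ 1 + sSup (tautNbrLevels G taut L v s(u, v)) := add_le_add_right hle 1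
      _ = L s(u, v) := by rw [h, hinf, hmin]

/-- If the level minimum of edge `k` of the path is attained at its left endpoint,
then all edges up to `k` have finite, strictly increasing levels. -/
lemma chain_lemma (G : SimpleGraph V) (taut : V → Sym2 V → Sym2 V → Prop)
    (taut_symm : ∀ v e f, taut v e f → taut v f e)
    (L : Sym2 V → ℕ∞) (hfix : ∀ e ∈ G.edgeSet, L e = levelOp G taut L e)
    (n : ℕ) (p : ℕ → V) (hp : IsTautPath G taut n p) :
    ∀ k, k < n → L s(p k, p (k + 1)) < ⊤ →
      (∀ f ∈ G.edgeSet, p k ∈ f → taut (p k) s(p k, p (k + 1)) f →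
        1 + L f ≤ L s(p k, p (k + 1))) →
      (∀ j ≤ k, L s(p j, p (j + 1)) < ⊤) ∧
      (∀ j, j + 1 ≤ k → L s(p j, p (j + 1)) < L s(p (j + 1), p (j + 2))) := by
  intro k
  induction k with
  | zero =>
    intro _ hfin _
    refine ⟨fun j hj => ?_, fun j hj => absurd hj (by omega)⟩
    interval_cases j
    exact hfin
  | succ k ih =>
    intro hkn hfin hmin
    have hadjk : G.Adj (p k) (p (k + 1)) := hp.2.1 k (by omega)
    have hadjk1 : G.Adj (p (k + 1)) (p (k + 2)) := hp.2.1 (k + 1) (by omega)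
    have htaut : taut (p (k + 1)) s(p k, p (k + 1)) s(p (k + 1), p (k + 2)) :=
      hp.2.2 (k + 1) (by omega) (by omega)
    have h1 : 1 + L s(p k, p (k + 1)) ≤ L s(p (k + 1), p (k + 2)) :=
      hmin s(p k, p (k + 1)) hadjk (Sym2.mem_mk_right _ _) (taut_symm _ _ _ htaut)
    have hlt : L s(p k, p (k + 1)) < L s(p (k + 1), p (k + 2)) :=
      enat_lt_of_one_add_le h1 hfin
    have hfin' : L s(p k, p (k + 1)) < ⊤ := hlt.trans hfin
    obtain ⟨w, hw, hwmin⟩ := exists_min_endpoint G taut L hfix hadjk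
    have hminK : ∀ f ∈ G.edgeSet, p k ∈ f → taut (p k) s(p k, p (k + 1)) f →
        1 + L f ≤ L s(p k, p (k + 1)) := by
      rcases hw with rfl | rfl
      · exact hwmin
      · exfalso
        have h2 : 1 + L s(p (k + 1), p (k + 2)) ≤ L s(p k, p (k + 1)) :=
          hwmin s(p (k + 1), p (k + 2)) hadjk1 (Sym2.mem_mk_left _ _) htaut
        have := enat_lt_of_one_add_le h2 hfin'
        exact absurd hlt this.asymm
    obtain ⟨ih1, ih2⟩ := ih (by omega) hfin' hminK
    constructor
    · intro j hj
      rcases Nat.lt_or_ge j (k + 1) with h | h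
      · exact ih1 j (by omega)
      · have : j = k + 1 := by omega
        subst this
        exact hfin
    · intro j hj
      rcases Nat.lt_or_ge (j + 1) (k + 1) with h | h
      · exact ih2 j (by omega)
      · have : j = k := by omega
        subst this
        exact hlt

lemma marked_of_chain (G : SimpleGraph V) (taut : V → Sym2 V → Sym2 V → Prop)
    (L : Sym2 V → ℕ∞) (n : ℕ) (p : ℕ → V) (hp : IsTautPath G taut n p)
    (k : ℕ) (hk : k < n)
    (h1 : ∀ j ≤ k, L s(p j, p (j + 1)) < ⊤)
    (h2 : ∀ j, j + 1 ≤ k → L s(p j, p (j + 1)) < L s(p (j + 1), p (j + 2))) :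
    MarkedFrom G taut L (p 0) s(p k, p (k + 1)) := by
  refine ⟨k + 1, p, ⟨by omega, fun i hi => hp.2.1 i (by omega),
    fun i hi1 hi2 => hp.2.2 i hi1 (by omega)⟩, rfl, ?_, ?_, rfl⟩
  · intro i hi1 hi2
    obtain ⟨j, rfl⟩ : ∃ j, i = j + 1 := ⟨i - 1, by omega⟩
    exact h1 j (by omega)
  · intro i hi1 hi2
    obtain ⟨j, rfl⟩ : ∃ j, i = j + 1 := ⟨i - 1, by omega⟩
    exact h2 j (by omega)

lemma reverse_taut (G : SimpleGraph V) (taut : V → Sym2 V → Sym2 V → Prop)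
    (taut_symm : ∀ v e f, taut v e f → taut v f e)
    (n : ℕ) (p : ℕ → V) (hp : IsTautPath G taut n p) :
    IsTautPath G taut n (fun j => p (n - j)) := by
  refine ⟨hp.1, ?_, ?_⟩
  · intro i hi
    obtain ⟨m, hm⟩ : ∃ m, n - i = m + 1 := ⟨n - i - 1, by omega⟩
    have h3 : n - (i + 1) = m := by omega
    simp only [hm, h3]
    exact (hp.2.1 m (by omega)).symm
  · intro i hi1 hi2
    have h1 : n - (i - 1) = (n - i) + 1 := by omega
    obtain ⟨m, hm⟩ : ∃ m, n - i = m + 1 := ⟨n - i - 1, by omega⟩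
    have h3 : n - (i + 1) = m := by omega
    simp only [h1, hm, h3]
    rw [show s(p (m + 1 + 1), p (m + 1)) = s(p (m + 1), p (m + 1 + 1)) from Sym2.eq_swap,
      show s(p (m + 1), p m) = s(p m, p (m + 1)) from Sym2.eq_swap]
    have := hp.2.2 (m + 1) (by omega) (by omega)
    exact taut_symm _ _ _ this

/-- Let `H` be the set of edges that are marked from `s`, or marked from `t`, or are
level-W. Then every taut path from `s` to `t` uses only edges belonging to `H`. -/
theorem taut_path_in_marked_subgraph
    [Fintype V] (G : SimpleGraph V)
    (taut : V → Sym2 V → Sym2 V → Prop)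
    (taut_symm : ∀ v e f, taut v e f → taut v f e)
    (L : Sym2 V → ℕ∞) (hL : IsEdgeLevel G taut L)
    (s t : V) (H : Set (Sym2 V))
    (hH : H = {e | MarkedFrom G taut L s e ∨ MarkedFrom G taut L t e ∨ L e = ⊤})
    (n : ℕ) (p : ℕ → V) (hp : IsTautPath G taut n p)
    (hps : p 0 = s) (hpt : p n = t) :
    ∀ i, 1 ≤ i → i ≤ n → s(p (i - 1), p i) ∈ H := by
  have hfix := hL.1
  intro i hi1 hin
  obtain ⟨k, rfl⟩ : ∃ k, i = k + 1 := ⟨i - 1, by omega⟩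
  show s(p k, p (k + 1)) ∈ H
  rw [hH]
  by_cases htop : L s(p k, p (k + 1)) = ⊤
  · exact Or.inr (Or.inr htop)
  have hfin : L s(p k, p (k + 1)) < ⊤ := lt_top_iff_ne_top.mpr htop
  have hadj : G.Adj (p k) (p (k + 1)) := hp.2.1 k (by omega)
  obtain ⟨w, hw, hwmin⟩ := exists_min_endpoint G taut L hfix hadj
  rcases hw with rfl | rfl
  · left
    obtain ⟨h1, h2⟩ := chain_lemma G taut taut_symm L hfix n p hp k (by omega) hfin hwmin
    have := marked_of_chain G taut L n p hp k (by omega) h1 h2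
    rwa [hps] at this
  · right; left
    set q : ℕ → V := fun j => p (n - j) with hq
    have hqpath : IsTautPath G taut n q := reverse_taut G taut taut_symm n p hp
    set k' : ℕ := n - k - 1 with hk'
    have hqk : q k' = p (k + 1) := by
      show p (n - (n - k - 1)) = p (k + 1); congr 1; omega
    have hqk1 : q (k' + 1) = p k := by
      show p (n - (n - k - 1 + 1)) = p k; congr 1; omega
    have hedge : s(q k', q (k' + 1)) = s(p k, p (k + 1)) := by
      rw [hqk, hqk1]; exact Sym2.eq_swap
    have hfin' : L s(q k', q (k' + 1)) < ⊤ := by rwa [hedge]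
    have hmin' : ∀ f ∈ G.edgeSet, q k' ∈ f → taut (q k') s(q k', q (k' + 1)) f →
        1 + L f ≤ L s(q k', q (k' + 1)) := by
      intro f hf hmem htf
      rw [hedge]
      rw [hedge, hqk] at htf
      rw [hqk] at hmem
      exact hwmin f hf hmem htf
    obtain ⟨h1, h2⟩ := chain_lemma G taut taut_symm L hfix n q hqpath k' (by omega) hfin' hmin'
    have := marked_of_chain G taut L n q hqpath k' (by omega) h1 h2
    rw [hedge] at this
    have hq0 : q 0 = t := by show p (n - 0) = t; rw [Nat.sub_zero, hpt]
    rwa [hq0] at this
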